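/- With the setup below, let N_{μ,τ} be an admissible Gaussian and let J ∈ {I₁,…,I_s} be an associated interval for it, i.e., |J ∩ L(N_{μ,τ})| ≥ 1/(8sτ) and τ ≤ φ/|J|. Define the rescaled precision τ̃ = (|J|/2)·τ and the rescaled mean μ̃ = τ·(μ − mid(J)), where mid(J) is the midpoint of J. Then √(2π)·ω/(16s) ≤ τ̃ ≤ φ/2 and μ̃ ∈ [−4sφ/ω, 4sφ/ω]. -/

import Mathlib

open MeasureTheory

/-- The Gaussian pdf with mean `μ` and precision `τ`. -/
noncomputable def gaussPdf (μ τ x : ℝ) : ℝ :=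
  τ / Real.sqrt (2 * Real.pi) * Real.exp (-(τ ^ 2 * (x - μ) ^ 2) / 2)

/-- The standard Gaussian pdf. -/
noncomputable def stdGauss (x : ℝ) : ℝ := gaussPdf 0 1 x

set_option maxHeartbeats 2000000 in
/-- Bounds on the rescaled mean and precision of an admissible Gaussian with respect to an
associated interval `J = I_ℓ = [c ℓ.castSucc, c ℓ.succ]`.  The intervals `I₁, …, I_s`
partitioning `[-1, 1]` are given by consecutive breakpoints `c 0 = -1 < ⋯ < c s = 1`. -/
theorem stmt14
    -- z* and ω from the setup
    (z ω : ℝ) (hz : 0 < z) (hzmass : (∫ x in (-z)..z, stdGauss x) = 55 / 56)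
    (hω : ω = stdGauss z)
    -- intervals I₁, …, I_s partitioning [-1, 1]
    (s : ℕ) (hs : 1 ≤ s) (c : Fin (s + 1) → ℝ) (hc : StrictMono c)
    (hc0 : c 0 = -1) (hclast : c (Fin.last s) = 1)
    -- the remaining scalar parameters and φ
    (m : ℕ) (hm : 1 ≤ m) (ε : ℝ) (hε : 0 < ε) (hε1 : ε ≤ 1) (k : ℕ) (hk : 1 ≤ k)
    (φ : ℝ)
    (hφ : φ = 32 * (k : ℝ) / (ω * ε) * ((m : ℝ) + 1) ^ 3 * (Real.sqrt 2 + 1) ^ m)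
    -- an admissible Gaussian N_{μ,τ} with associated interval J = I_ℓ
    (μ τ : ℝ) (hτ : 0 < τ)
    (hmass : (∫ x in (-1 : ℝ)..1, gaussPdf μ τ x) ≥ 1 / 2)
    (ℓ : Fin s)
    (hoverlap : (volume (Set.Icc (c ℓ.castSucc) (c ℓ.succ) ∩
        Set.Icc (μ - z / τ) (μ + z / τ))).toReal ≥ 1 / (8 * (s : ℝ) * τ))
    (hτφ : τ ≤ φ / (c ℓ.succ - c ℓ.castSucc)) :
    -- bounds on the rescaled precision τ̃ = (|J|/2)·τ and rescaled mean μ̃ = τ·(μ − mid(J))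
    Real.sqrt (2 * Real.pi) * ω / (16 * (s : ℝ)) ≤ (c ℓ.succ - c ℓ.castSucc) / 2 * τ ∧
    (c ℓ.succ - c ℓ.castSucc) / 2 * τ ≤ φ / 2 ∧
    τ * (μ - (c ℓ.castSucc + c ℓ.succ) / 2)
      ∈ Set.Icc (-(4 * (s : ℝ) * φ / ω)) (4 * (s : ℝ) * φ / ω) := by
  set a := c ℓ.castSucc with ha
  set b := c ℓ.succ with hb
  have hab : a < b := hc ℓ.castSucc_lt_succ
  have hspos : (0:ℝ) < s := by exact_mod_cast hs
  -- facts about ω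
  have hsqpi : (2:ℝ) ≤ Real.sqrt (2 * Real.pi) := by
    have : (2:ℝ)^2 ≤ 2 * Real.pi := by nlinarith [Real.pi_gt_three]
    nlinarith [Real.sq_sqrt (by positivity : (0:ℝ) ≤ 2*Real.pi), Real.sqrt_nonneg (2*Real.pi)]
  have hsqpos : (0:ℝ) < Real.sqrt (2 * Real.pi) := by linarith
  have hωeq : Real.sqrt (2 * Real.pi) * ω = Real.exp (-(z^2)/2) := by
    rw [hω]; simp only [stdGauss, gaussPdf]
    field_simp
    rw [sub_zero]
  have hexp1 : Real.exp (-(z^2)/2) ≤ 1 := by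
    rw [Real.exp_le_one_iff]; nlinarith
  have hωpos : 0 < ω := by
    have := Real.exp_pos (-(z^2)/2)
    nlinarith
  have hω1 : ω ≤ 1 := by nlinarith
  have hωs : Real.sqrt (2 * Real.pi) * ω ≤ 1 := by rw [hωeq]; exact hexp1
  -- z ≤ 1/(2ω), in product form : 2*ω*z ≤ 1
  have hzω : 2 * ω * z ≤ 1 := by
    have h1 : z ≤ Real.exp (z^2/2) := by
      have := Real.add_one_le_exp (z^2/2)
      nlinarith
    have h2 : Real.exp (-(z^2)/2) * Real.exp (z^2/2) = 1 := by
      rw [← Real.exp_add]; ring_nf; exact Real.exp_zero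
    have h4 : Real.exp (-(z^2)/2) * z ≤ 1 := by
      calc Real.exp (-(z^2)/2) * z ≤ Real.exp (-(z^2)/2) * Real.exp (z^2/2) :=
            mul_le_mul_of_nonneg_left h1 (Real.exp_pos _).le
        _ = 1 := h2
    have h5 : Real.sqrt (2 * Real.pi) * ω * z = Real.exp (-(z^2)/2) * z := by rw [hωeq]
    have h6 : 0 ≤ (Real.sqrt (2 * Real.pi) - 2) * ω * z :=
      mul_nonneg (mul_nonneg (by linarith) hωpos.le) hz.le
    linarith [h4, h5, h6]
  -- φ is large : 32 ≤ φ
  have hφ32 : 32 ≤ φ := by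
    have hk1 : (1:ℝ) ≤ (k:ℝ) := by exact_mod_cast hk
    have hm1 : (1:ℝ) ≤ ((m:ℝ)+1)^3 :=
      one_le_pow₀ (by linarith [Nat.cast_nonneg (α := ℝ) m])
    have hsq2 : (1:ℝ) ≤ Real.sqrt 2 + 1 := by linarith [Real.sqrt_nonneg 2]
    have hpm : (1:ℝ) ≤ (Real.sqrt 2 + 1) ^ m := one_le_pow₀ hsq2
    have hεω : ω * ε ≤ 1 := by nlinarith
    have hεωpos : 0 < ω * ε := by positivity
    have h32 : (32:ℝ) ≤ 32 * (k:ℝ) / (ω * ε) := by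
      rw [le_div_iff₀ hεωpos]; nlinarith
    rw [hφ]
    calc (32:ℝ) ≤ 32 * (k:ℝ) / (ω * ε) := h32
      _ ≤ 32 * (k:ℝ) / (ω * ε) * ((m:ℝ)+1)^3 := le_mul_of_one_le_right (by linarith) hm1
      _ ≤ _ := le_mul_of_one_le_right (mul_nonneg (by linarith) (by positivity)) hpm
  have hφpos : 0 < φ := by linarith
  -- overlap ≤ b - a
  have hover_le : (volume (Set.Icc a b ∩ Set.Icc (μ - z / τ) (μ + z / τ))).toReal ≤ b - a := by
    apply ENNReal.toReal_le_of_le_ofReal (by linarith)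
    calc volume (Set.Icc a b ∩ Set.Icc (μ - z / τ) (μ + z / τ))
        ≤ volume (Set.Icc a b) := measure_mono Set.inter_subset_left
      _ = ENNReal.ofReal (b - a) := by rw [Real.volume_Icc]
  have hba : 1 / (8 * (s:ℝ) * τ) ≤ b - a := le_trans hoverlap hover_le
  -- part 1
  have h1 : 1 / (16 * (s:ℝ)) ≤ (b - a) / 2 * τ := by
    rw [div_le_iff₀ (by positivity)] at hba
    rw [div_le_iff₀ (by positivity)]
    have heq : (b - a) / 2 * τ * (16 * (s:ℝ)) = (b - a) * (8 * (s:ℝ) * τ) := by ring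
    linarith [heq ▸ hba]
  have part1 : Real.sqrt (2 * Real.pi) * ω / (16 * (s : ℝ)) ≤ (b - a) / 2 * τ := by
    exact le_trans (div_le_div_of_nonneg_right hωs (by positivity)) h1
  -- part 2
  have hτba : (b - a) * τ ≤ φ := by
    rw [le_div_iff₀ (by linarith)] at hτφ; linarith [hτφ]
  have part2 : (b - a) / 2 * τ ≤ φ / 2 := by linarith
  -- part 3 : nonempty intersection
  have hne : (Set.Icc a b ∩ Set.Icc (μ - z / τ) (μ + z / τ)).Nonempty := by
    by_contra h
    rw [Set.not_nonempty_iff_eq_empty] at h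
    rw [h, measure_empty, ENNReal.toReal_zero] at hoverlap
    have : 0 < 1 / (8 * (s:ℝ) * τ) := by positivity
    linarith
  obtain ⟨x, ⟨hx1, hx2⟩, hx3, hx4⟩ := hne
  have habs : |τ * (μ - (a + b) / 2)| ≤ 4 * (s:ℝ) * φ / ω := by
    have hd1 : τ * (μ - x) ≤ z := by
      have : τ * (z / τ) = z := mul_div_cancel₀ _ hτ.ne'
      nlinarith [mul_le_mul_of_nonneg_left (by linarith : μ - x ≤ z / τ) hτ.le]
    have hd2 : τ * (x - μ) ≤ z := by
      have : τ * (z / τ) = z := mul_div_cancel₀ _ hτ.ne'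
      nlinarith [mul_le_mul_of_nonneg_left (by linarith : x - μ ≤ z / τ) hτ.le]
    have key : |τ * (μ - (a + b) / 2)| ≤ z + τ * (b - a) / 2 := by
      rw [abs_le]
      constructor <;> nlinarith
    have hstep : z + τ * (b - a) / 2 ≤ 4 * (s:ℝ) * φ / ω := by
      rw [le_div_iff₀ hωpos]
      have h1 : z * ω ≤ 1/2 := by nlinarith
      have h2 : τ * (b - a) / 2 * ω ≤ φ / 2 := by nlinarith
      have hs1 : (1:ℝ) ≤ (s:ℝ) := by exact_mod_cast hs
      have h3 : 4 * φ ≤ 4 * (s:ℝ) * φ := by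
        nlinarith [mul_nonneg (by linarith : (0:ℝ) ≤ (s:ℝ) - 1) hφpos.le]
      nlinarith
    linarith
  refine ⟨part1, part2, ?_⟩
  rw [Set.mem_Icc, ← abs_le]
  exact habs
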